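/- There exists a constant C > 0, depending only on α and T, such that for every t with max(0, T − 1/e) < t < T one has ‖f_t ⊗₁ g_t‖ ≤ C/λ_t. -/

import Mathlib

open MeasureTheory Real Filter Topology

/-- `λ_t := |log(T−t)|/(2α−1)`. -/
noncomputable def lam (T α t : ℝ) : ℝ := |Real.log (T - t)| / (2 * α - 1)

/-- The kernel `f_t`. -/
noncomputable def fker (T α t : ℝ) (u v : ℝ) : ℝ :=
  if u ∈ Set.Icc (0:ℝ) t ∧ v ∈ Set.Icc (0:ℝ) t then
    (1 / (2 * Real.sqrt (lam T α t))) * (T - max u v) ^ (α - 1) * (T - min u v) ^ (-α)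
  else 0

/-- The kernel `g_t`. -/
noncomputable def gker (T α t : ℝ) (u v : ℝ) : ℝ :=
  if u ∈ Set.Icc (0:ℝ) t ∧ v ∈ Set.Icc (0:ℝ) t then
    (T - u) ^ (-α) * (T - v) ^ (-α) *
      ((T - max u v) ^ (2 * α - 1) - (T - t) ^ (2 * α - 1)) / |Real.log (T - t)|
  else 0

/-- `⟨p,q⟩ := ∫_{[0,T]²} p(u,v) q(u,v) du dv`. -/
noncomputable def ip (T : ℝ) (p q : ℝ → ℝ → ℝ) : ℝ :=
  ∫ u in Set.Icc (0:ℝ) T, ∫ v in Set.Icc (0:ℝ) T, p u v * q u v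

/-- `‖p‖² := ⟨p,p⟩`. -/
noncomputable def normSq (T : ℝ) (p : ℝ → ℝ → ℝ) : ℝ := ip T p p

/-- The contraction `(p ⊗₁ q)(x,y) := ∫₀^T p(x,u) q(y,u) du`. -/
noncomputable def contr (T : ℝ) (p q : ℝ → ℝ → ℝ) : ℝ → ℝ → ℝ :=
  fun x y => ∫ u in Set.Icc (0:ℝ) T, p x u * q y u

/-- `b_t := (1/λ_t)·∫₀ᵗ ∫₀ˢ (T−s)^{2α−2}(T−u)^{−2α} du ds`. -/
noncomputable def bfun (T α t : ℝ) : ℝ :=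
  (1 / lam T α t) *
    ∫ s in (0:ℝ)..t, ∫ u in (0:ℝ)..s, (T - s) ^ (2 * α - 2) * (T - u) ^ (-(2 * α))

/-- `A_{t,1}`. -/
noncomputable def A1 (T α t : ℝ) : ℝ :=
  (1 / (lam T α t) ^ 2) *
    ∫ x4 in (0:ℝ)..t, ∫ x3 in (0:ℝ)..x4, ∫ x2 in (0:ℝ)..x3, ∫ x1 in (0:ℝ)..x2,
      (T - x4) ^ (2 * α - 2) * (T - x3) ^ (-1 : ℝ) * (T - x2) ^ (-1 : ℝ) *
        (T - x1) ^ (-(2 * α))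

/-- `A_{t,2}`. -/
noncomputable def A2 (T α t : ℝ) : ℝ :=
  (1 / (2 * (lam T α t) ^ 2)) *
    ∫ x4 in (0:ℝ)..t, ∫ x2 in (0:ℝ)..x4, ∫ x3 in (0:ℝ)..x2, ∫ x1 in (0:ℝ)..x3,
      (T - x4) ^ (2 * α - 2) * (T - x2) ^ (2 * α - 2) * (T - x3) ^ (-(2 * α)) *
        (T - x1) ^ (-(2 * α))

section Helpers
open Set

lemma min_rpow_le {b c β τ : ℝ} (hb : 0 < b) (hc : 0 < c) (hτ : 0 ≤ τ) (hτβ : τ ≤ β) :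
    min b c ^ β ≤ b ^ (β - τ) * c ^ τ := by
  rcases le_total b c with h | h
  · rw [min_eq_left h]
    calc b ^ β = b ^ (β - τ) * b ^ τ := by rw [← Real.rpow_add hb]; ring_nf
    _ ≤ b ^ (β - τ) * c ^ τ :=
      mul_le_mul_of_nonneg_left (Real.rpow_le_rpow hb.le h hτ) (Real.rpow_nonneg hb.le _)
  · rw [min_eq_right h]
    calc c ^ β = c ^ (β - τ) * c ^ τ := by rw [← Real.rpow_add hc]; ring_nf
    _ ≤ b ^ (β - τ) * c ^ τ :=
      mul_le_mul_of_nonneg_right (Real.rpow_le_rpow hc.le h (by linarith)) (Real.rpow_nonneg hc.le _)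

lemma keyInt {α τ a Tb : ℝ} (hα : 1 / 2 < α) (ha : 0 < a) (haT : a ≤ Tb) (hτ : 0 < τ)
    (hτβ : τ < 2 * α - 1) :
    IntervalIntegrable (fun b => min a b ^ (α - 1) * max a b ^ (-α) * b ^ (α - 1 - τ)) volume 0 Tb ∧
      (∫ b in (0:ℝ)..Tb, min a b ^ (α - 1) * max a b ^ (-α) * b ^ (α - 1 - τ)) ≤
        (1 / (2 * α - 1 - τ) + 1 / τ) * a ^ (α - 1 - τ) := by
  set f : ℝ → ℝ := fun b => min a b ^ (α - 1) * max a b ^ (-α) * b ^ (α - 1 - τ) with hf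
  have hq1 : (-1 : ℝ) < 2 * α - 2 - τ := by linarith
  have h1 : EqOn f (fun b => a ^ (-α) * b ^ (2 * α - 2 - τ)) (Ioc 0 a) := by
    intro b hb
    simp only [hf, min_eq_right hb.2, max_eq_left hb.2]
    rw [show (2:ℝ) * α - 2 - τ = (α - 1) + (α - 1 - τ) by ring, Real.rpow_add hb.1]
    ring
  have h2 : EqOn f (fun b => a ^ (α - 1) * b ^ (-1 - τ)) (Ioc a Tb) := by
    intro b hb
    have hb0 : 0 < b := ha.trans hb.1
    simp only [hf, min_eq_left hb.1.le, max_eq_right hb.1.le]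
    rw [show (-1:ℝ) - τ = (-α) + (α - 1 - τ) by ring, Real.rpow_add hb0]
    ring
  have i1 : IntervalIntegrable f volume 0 a := by
    constructor
    · exact (((intervalIntegral.intervalIntegrable_rpow' hq1).const_mul (a ^ (-α))).1).congr_fun
        h1.symm measurableSet_Ioc
    · rw [Set.Ioc_eq_empty (by exact not_lt.mpr ha.le)]; exact integrableOn_empty
  have h0T : (0:ℝ) ∉ Set.uIcc a Tb := by
    rw [Set.uIcc_of_le haT]
    exact fun h => absurd h.1 (not_le.mpr ha)
  have i2 : IntervalIntegrable f volume a Tb := by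
    constructor
    · exact (((intervalIntegral.intervalIntegrable_rpow (Or.inr h0T)).const_mul (a ^ (α - 1))).1).congr_fun
        h2.symm measurableSet_Ioc
    · rw [Set.Ioc_eq_empty (by exact not_lt.mpr haT)]; exact integrableOn_empty
  refine ⟨i1.trans i2, ?_⟩
  rw [← intervalIntegral.integral_add_adjacent_intervals i1 i2]
  have e1 : (∫ b in (0:ℝ)..a, f b) = a ^ (-α) * (a ^ (2 * α - 1 - τ) / (2 * α - 1 - τ)) := by
    rw [intervalIntegral.integral_of_le ha.le, setIntegral_congr_fun measurableSet_Ioc h1,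
      ← intervalIntegral.integral_of_le ha.le, intervalIntegral.integral_const_mul,
      integral_rpow (Or.inl hq1)]
    rw [Real.zero_rpow (by linarith : (2:ℝ) * α - 2 - τ + 1 ≠ 0),
      show (2:ℝ) * α - 2 - τ + 1 = 2 * α - 1 - τ by ring]
    ring
  have e2 : (∫ b in a..Tb, f b) = a ^ (α - 1) * ((Tb ^ (-τ) - a ^ (-τ)) / (-1 - τ + 1)) := by
    rw [intervalIntegral.integral_of_le haT, setIntegral_congr_fun measurableSet_Ioc h2,
      ← intervalIntegral.integral_of_le haT, intervalIntegral.integral_const_mul,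
      integral_rpow (Or.inr ⟨by linarith, h0T⟩)]
    rw [show (-1:ℝ) - τ + 1 = -τ by ring]
  rw [e1, e2]
  have hb1 : a ^ (-α) * (a ^ (2 * α - 1 - τ) / (2 * α - 1 - τ)) =
      (1 / (2 * α - 1 - τ)) * a ^ (α - 1 - τ) := by
    rw [show (α:ℝ) - 1 - τ = (-α) + (2 * α - 1 - τ) by ring, Real.rpow_add ha]
    ring
  have hb2 : a ^ (α - 1) * ((Tb ^ (-τ) - a ^ (-τ)) / (-1 - τ + 1)) ≤ (1 / τ) * a ^ (α - 1 - τ) := by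
    rw [show (-1:ℝ) - τ + 1 = -τ by ring,
      show (Tb ^ (-τ) - a ^ (-τ)) / (-τ) = (a ^ (-τ) - Tb ^ (-τ)) / τ by
        rw [div_neg, ← neg_div, neg_sub],
      show (α:ℝ) - 1 - τ = (α - 1) + (-τ) by ring, Real.rpow_add ha]
    have h1 : (a ^ (-τ) - Tb ^ (-τ)) / τ ≤ a ^ (-τ) / τ := by
      gcongr
      linarith [Real.rpow_nonneg ((ha.le.trans haT)) (-τ)]
    calc a ^ (α - 1) * ((a ^ (-τ) - Tb ^ (-τ)) / τ) ≤ a ^ (α - 1) * (a ^ (-τ) / τ) :=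
          mul_le_mul_of_nonneg_left h1 (Real.rpow_nonneg ha.le _)
      _ = 1 / τ * (a ^ (α - 1) * a ^ (-τ)) := by ring
  rw [hb1, add_mul]
  exact add_le_add le_rfl hb2

end Helpers

section MainAux
variable {T α t : ℝ}

lemma fg_nonneg (hα : 1 / 2 < α) (htT : t < T) (x y u : ℝ) :
    0 ≤ fker T α t x u * gker T α t y u := by
  apply mul_nonneg
  · rw [fker]
    split_ifs with h
    · have h1 : max x u ≤ t := max_le h.1.2 h.2.2
      have h2 : min x u ≤ t := le_trans (min_le_left _ _) h.1.2
      exact mul_nonneg (mul_nonneg (by positivity) (Real.rpow_nonneg (by linarith) _))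
        (Real.rpow_nonneg (by linarith) _)
    · exact le_refl 0
  · rw [gker]
    split_ifs with h
    · have h1 : max y u ≤ t := max_le h.1.2 h.2.2
      apply div_nonneg _ (abs_nonneg _)
      apply mul_nonneg (mul_nonneg (Real.rpow_nonneg (by linarith [h.1.2]) _)
        (Real.rpow_nonneg (by linarith [h.2.2]) _))
      exact sub_nonneg.2 (Real.rpow_le_rpow (by linarith) (by linarith) (by linarith))
    · exact le_refl 0

lemma contr_nonneg (hα : 1 / 2 < α) (htT : t < T) (x y : ℝ) :
    0 ≤ contr T (fker T α t) (gker T α t) x y :=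
  integral_nonneg fun u => fg_nonneg hα htT x y u

lemma contr_zero_left {x : ℝ} (hx : x ∉ Set.Icc 0 t) (y : ℝ) :
    contr T (fker T α t) (gker T α t) x y = 0 := by
  rw [contr]
  have : ∀ u, fker T α t x u * gker T α t y u = 0 := fun u => by
    rw [fker, if_neg fun h => hx h.1, zero_mul]
  simp only [this, integral_zero]

lemma contr_zero_right (x : ℝ) {y : ℝ} (hy : y ∉ Set.Icc 0 t) :
    contr T (fker T α t) (gker T α t) x y = 0 := by
  rw [contr]
  have : ∀ u, fker T α t x u * gker T α t y u = 0 := fun u => by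
    rw [gker, if_neg fun h => hy h.1, mul_zero]
  simp only [this, integral_zero]

lemma contrE1 (hT : 0 < T) (hα : 1 / 2 < α) (htT : t < T)
    (hL0 : 0 < |Real.log (T - t)|) {τ : ℝ} (hτ0 : 0 < τ) (hτβ : τ < 2 * α - 1)
    {x y : ℝ} (hx : x ∈ Set.Icc 0 t) (hy : y ∈ Set.Icc 0 t) :
    contr T (fker T α t) (gker T α t) x y ≤
      ((1 / (2 * α - 1 - τ) + 1 / τ) / (2 * Real.sqrt (lam T α t) * |Real.log (T - t)|)) *
        ((T - x) ^ (α - 1 - τ) * (T - y) ^ (τ - α)) := by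
  have hβ0 : (0:ℝ) < 2 * α - 1 := by linarith
  have hlam0 : 0 < lam T α t := div_pos hL0 hβ0
  have hsq0 : 0 < Real.sqrt (lam T α t) := Real.sqrt_pos.2 hlam0
  have hε0 : 0 < T - t := by linarith
  have ha0 : 0 < T - x := by have := hx.2; linarith
  have haT : T - x ≤ T := by have := hx.1; linarith
  have hc0 : 0 < T - y := by have := hy.2; linarith
  obtain ⟨hfi, hfb⟩ := keyInt (Tb := T) hα ha0 haT hτ0 hτβ
  set L := |Real.log (T - t)| with hLdef
  set a := T - x with hadef
  set c := T - y with hcdef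
  set f : ℝ → ℝ := fun b => min a b ^ (α - 1) * max a b ^ (-α) * b ^ (α - 1 - τ) with hfdef
  set r := c ^ (τ - α) / (2 * Real.sqrt (lam T α t) * L) with hrdef
  have hr0 : 0 ≤ r := by
    apply div_nonneg (Real.rpow_nonneg hc0.le _) (by positivity)
  have hmaj : ∀ u ∈ Set.Ioc (0:ℝ) T, fker T α t x u * gker T α t y u ≤ r * f (T - u) := by
    intro u hu
    have hbT0 : 0 ≤ T - u := by linarith [hu.2]
    by_cases hut : u ∈ Set.Icc (0:ℝ) t
    · have hb0 : 0 < T - u := by have := hut.2; linarith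
      rw [fker, gker, if_pos ⟨hx, hut⟩, if_pos ⟨hy, hut⟩]
      rw [← min_sub_sub_left T x u, ← max_sub_sub_left T x u, ← min_sub_sub_left T y u]
      rw [← hadef, ← hcdef, ← hLdef]
      have hXY : min c (T - u) ^ (2 * α - 1) - (T - t) ^ (2 * α - 1) ≤
          (T - u) ^ (2 * α - 1 - τ) * c ^ τ := by
        have h1 : min c (T - u) ^ (2 * α - 1) ≤ (T - u) ^ (2 * α - 1 - τ) * c ^ τ := by
          rw [min_comm]
          exact min_rpow_le hb0 hc0 hτ0.le hτβ.le
        have h2 : 0 ≤ (T - t) ^ (2 * α - 1) := Real.rpow_nonneg hε0.le _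
        linarith
      have hF0 : 0 ≤ 1 / (2 * Real.sqrt (lam T α t)) * min a (T - u) ^ (α - 1) *
          max a (T - u) ^ (-α) * (c ^ (-α) * (T - u) ^ (-α) / L) := by
        have m1 : (0:ℝ) ≤ min a (T - u) := le_min ha0.le hbT0
        have m2 : (0:ℝ) ≤ max a (T - u) := le_trans ha0.le (le_max_left _ _)
        apply mul_nonneg (mul_nonneg (mul_nonneg (by positivity) (Real.rpow_nonneg m1 _))
          (Real.rpow_nonneg m2 _))
        exact div_nonneg (mul_nonneg (Real.rpow_nonneg hc0.le _) (Real.rpow_nonneg hbT0 _))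
          (abs_nonneg _)
      calc 1 / (2 * Real.sqrt (lam T α t)) * min a (T - u) ^ (α - 1) * max a (T - u) ^ (-α) *
            (c ^ (-α) * (T - u) ^ (-α) * (min c (T - u) ^ (2 * α - 1) - (T - t) ^ (2 * α - 1)) / L)
          = (1 / (2 * Real.sqrt (lam T α t)) * min a (T - u) ^ (α - 1) * max a (T - u) ^ (-α) *
            (c ^ (-α) * (T - u) ^ (-α) / L)) *
            (min c (T - u) ^ (2 * α - 1) - (T - t) ^ (2 * α - 1)) := by ring
        _ ≤ (1 / (2 * Real.sqrt (lam T α t)) * min a (T - u) ^ (α - 1) * max a (T - u) ^ (-α) *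
            (c ^ (-α) * (T - u) ^ (-α) / L)) * ((T - u) ^ (2 * α - 1 - τ) * c ^ τ) :=
            mul_le_mul_of_nonneg_left hXY hF0
        _ = r * f (T - u) := by
            simp only [hfdef, hrdef]
            rw [show τ - α = -α + τ by ring, Real.rpow_add hc0,
              show α - 1 - τ = -α + (2 * α - 1 - τ) by ring, Real.rpow_add hb0]
            field_simp
    · rw [fker, if_neg fun h => hut h.2, zero_mul]
      apply mul_nonneg hr0
      have m1 : (0:ℝ) ≤ min a (T - u) := le_min ha0.le hbT0
      have m2 : (0:ℝ) ≤ max a (T - u) := le_trans ha0.le (le_max_left _ _)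
      exact mul_nonneg (mul_nonneg (Real.rpow_nonneg m1 _) (Real.rpow_nonneg m2 _))
        (Real.rpow_nonneg hbT0 _)
  have hint : IntegrableOn (fun u => r * f (T - u)) (Set.Ioc 0 T) := by
    have h1 : IntervalIntegrable (fun u => f (T - u)) volume 0 T := by
      have := (hfi.comp_sub_left T).symm
      simpa using this
    exact (h1.const_mul r).1
  have step1 : contr T (fker T α t) (gker T α t) x y ≤ ∫ u in Set.Ioc (0:ℝ) T, r * f (T - u) := by
    rw [contr, integral_Icc_eq_integral_Ioc]
    exact integral_mono_of_nonneg (Filter.Eventually.of_forall fun u => fg_nonneg hα htT x y u)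
      hint (ae_restrict_of_forall_mem measurableSet_Ioc hmaj)
  have step2 : (∫ u in Set.Ioc (0:ℝ) T, r * f (T - u)) ≤
      r * ((1 / (2 * α - 1 - τ) + 1 / τ) * a ^ (α - 1 - τ)) := by
    rw [← intervalIntegral.integral_of_le hT.le, intervalIntegral.integral_const_mul]
    apply mul_le_mul_of_nonneg_left _ hr0
    calc (∫ u in (0:ℝ)..T, f (T - u)) = ∫ b in T - T..T - 0, f b :=
          intervalIntegral.integral_comp_sub_left f T
      _ = ∫ b in (0:ℝ)..T, f b := by norm_num
      _ ≤ (1 / (2 * α - 1 - τ) + 1 / τ) * a ^ (α - 1 - τ) := hfb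
  refine (step1.trans step2).trans (le_of_eq ?_)
  rw [hrdef]
  ring

end MainAux

section MainAux2
variable {T α t : ℝ}

lemma rpow_eqexp {a e1 e2 : ℝ} (h : e1 = e2) : a ^ e1 = a ^ e2 := by rw [h]

lemma contrE4 (hT : 0 < T) (hα : 1 / 2 < α) (htT : t < T)
    (hL0 : 0 < |Real.log (T - t)|) {x : ℝ} (hx : x ∈ Set.Icc 0 t) :
    (∫ y in Set.Icc (0:ℝ) T, contr T (fker T α t) (gker T α t) x y *
        contr T (fker T α t) (gker T α t) x y) ≤
      ((1 / (2 * α - 1 - (2 * α - 1) / 4) + 1 / ((2 * α - 1) / 4)) /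
          (2 * Real.sqrt (lam T α t) * |Real.log (T - t)|)) ^ 2 *
        (4 / (2 * α - 1)) * (T - x) ^ (-1 : ℝ) := by
  have hβ0 : (0:ℝ) < 2 * α - 1 := by linarith
  have hε0 : 0 < T - t := by linarith
  have ha0 : 0 < T - x := by have := hx.2; linarith
  have hxT : x < T := by have := hx.2; linarith
  set δ' : ℝ := (2 * α - 1) / 4 with hδdef
  set K : ℝ := 1 / (2 * α - 1 - δ') + 1 / δ' with hKdef
  set R : ℝ := K / (2 * Real.sqrt (lam T α t) * |Real.log (T - t)|) with hRdef
  have hR0 : 0 ≤ R := by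
    have hlam0 : 0 < lam T α t := div_pos hL0 hβ0
    have hsq0 : 0 < Real.sqrt (lam T α t) := Real.sqrt_pos.2 hlam0
    have hK0 : 0 < K := by
      rw [hKdef]
      have h1 : (0:ℝ) < 2 * α - 1 - δ' := by rw [hδdef]; linarith
      have h2 : (0:ℝ) < δ' := by rw [hδdef]; linarith
      positivity
    positivity
  set a : ℝ := T - x with hadef
  set w : ℝ → ℝ := fun y =>
    if x ≤ y then a ^ (δ' - α) * (T - y) ^ (α - 1 - δ')
    else a ^ (α - 1 - δ') * (T - y) ^ (δ' - α) with hwdef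
  set g : ℝ → ℝ := fun y => R ^ 2 * (w y * w y) with hgdef
  -- pointwise bound
  have hptwise : ∀ y ∈ Set.Icc (0:ℝ) T,
      contr T (fker T α t) (gker T α t) x y * contr T (fker T α t) (gker T α t) x y ≤
        Set.indicator (Set.Icc (0:ℝ) t) g y := by
    intro y _
    by_cases hyt : y ∈ Set.Icc (0:ℝ) t
    · rw [Set.indicator_of_mem hyt]
      have h1 : contr T (fker T α t) (gker T α t) x y ≤ R * w y := by
        by_cases hxy : x ≤ y
        · have h2 := contrE1 hT hα htT hL0 (τ := 2 * α - 1 - δ')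
            (by rw [hδdef]; linarith) (by rw [hδdef]; linarith) hx hyt
          rw [show α - 1 - (2 * α - 1 - δ') = δ' - α by ring,
            show 2 * α - 1 - δ' - α = α - 1 - δ' by ring,
            show 2 * α - 1 - (2 * α - 1 - δ') = δ' by ring] at h2
          refine h2.trans (le_of_eq ?_)
          rw [hRdef, hKdef, hwdef]
          simp only [if_pos hxy]
          try ring
        · have h2 := contrE1 hT hα htT hL0 (τ := δ')
            (by rw [hδdef]; linarith) (by rw [hδdef]; linarith) hx hyt
          refine h2.trans (le_of_eq ?_)
          rw [hRdef, hKdef, hwdef]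
          simp only [if_neg hxy]
          try ring
      have h0 := contr_nonneg hα htT (T := T) (t := t) x y
      have hw0 : 0 ≤ R * w y := le_trans h0 h1
      calc contr T (fker T α t) (gker T α t) x y * contr T (fker T α t) (gker T α t) x y
          ≤ (R * w y) * (R * w y) := mul_le_mul h1 h1 h0 hw0
        _ = g y := by rw [hgdef]; ring
    · rw [Set.indicator_of_notMem hyt, contr_zero_right x hyt]
      simp
  -- equalities on pieces
  have heq1 : Set.EqOn g (fun y => (R ^ 2 * (a ^ (α - 1 - δ') * a ^ (α - 1 - δ'))) *
      (T - y) ^ ((δ' - α) + (δ' - α))) (Set.Icc 0 x) := by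
    intro y hy
    have hTy : 0 < T - y := by have := hy.2; linarith
    rcases lt_or_eq_of_le hy.2 with h | h
    · simp only [hgdef, hwdef, if_neg (not_le.2 h)]
      rw [Real.rpow_add hTy]
      ring
    · subst h
      simp only [hgdef, hwdef, if_pos le_rfl]
      rw [Real.rpow_add hTy, ← hadef]
      simp only [mul_assoc, ← Real.rpow_add ha0]
      congr 1
      exact rpow_eqexp (by ring)
  have heq2 : Set.EqOn g (fun y => (R ^ 2 * (a ^ (δ' - α) * a ^ (δ' - α))) *
      (T - y) ^ ((α - 1 - δ') + (α - 1 - δ'))) (Set.Ioc x t) := by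
    intro y hy
    have hTy : 0 < T - y := by have := hy.2; linarith
    simp only [hgdef, hwdef, if_pos hy.1.le]
    rw [Real.rpow_add hTy]
    ring
  -- integrability on pieces
  have hcont1 : ContinuousOn (fun y => (R ^ 2 * (a ^ (α - 1 - δ') * a ^ (α - 1 - δ'))) *
      (T - y) ^ ((δ' - α) + (δ' - α))) (Set.Icc 0 x) := by
    apply continuousOn_const.mul
    apply ContinuousOn.rpow_const ((continuous_const.sub continuous_id).continuousOn)
    intro y hy
    exact Or.inl (ne_of_gt (by have := hy.2; show 0 < T - y; linarith))
  have hcont2 : ContinuousOn (fun y => (R ^ 2 * (a ^ (δ' - α) * a ^ (δ' - α))) *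
      (T - y) ^ ((α - 1 - δ') + (α - 1 - δ'))) (Set.Icc x t) := by
    apply continuousOn_const.mul
    apply ContinuousOn.rpow_const ((continuous_const.sub continuous_id).continuousOn)
    intro y hy
    exact Or.inl (ne_of_gt (by have := hy.2; show 0 < T - y; linarith))
  have hi1 : IntegrableOn g (Set.Icc 0 x) :=
    (hcont1.integrableOn_compact isCompact_Icc).congr_fun heq1.symm measurableSet_Icc
  have hi2 : IntegrableOn g (Set.Ioc x t) :=
    ((hcont2.integrableOn_compact isCompact_Icc).mono_set Set.Ioc_subset_Icc_self).congr_fun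
      heq2.symm measurableSet_Ioc
  have hgIcc : IntegrableOn g (Set.Icc 0 t) := by
    rw [← Set.Icc_union_Ioc_eq_Icc hx.1 hx.2]
    exact hi1.union hi2
  have hWint : IntegrableOn (Set.indicator (Set.Icc (0:ℝ) t) g) (Set.Icc 0 T) :=
    (hgIcc.integrable_indicator measurableSet_Icc).integrableOn
  -- monotonicity step
  have step1 : (∫ y in Set.Icc (0:ℝ) T, contr T (fker T α t) (gker T α t) x y *
      contr T (fker T α t) (gker T α t) x y) ≤
      ∫ y in Set.Icc (0:ℝ) T, Set.indicator (Set.Icc (0:ℝ) t) g y :=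
    integral_mono_of_nonneg (Filter.Eventually.of_forall fun y => mul_self_nonneg _)
      hWint (ae_restrict_of_forall_mem measurableSet_Icc hptwise)
  -- compute the majorant integral
  have step2 : (∫ y in Set.Icc (0:ℝ) T, Set.indicator (Set.Icc (0:ℝ) t) g y) =
      ∫ y in Set.Icc (0:ℝ) t, g y := by
    rw [setIntegral_indicator measurableSet_Icc,
      Set.inter_eq_self_of_subset_right (Set.Icc_subset_Icc le_rfl htT.le)]
  have ii1 : IntervalIntegrable g volume 0 x := by
    constructor
    · exact hi1.mono_set Set.Ioc_subset_Icc_self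
    · rw [Set.Ioc_eq_empty (not_lt.2 hx.1)]; exact integrableOn_empty
  have ii2 : IntervalIntegrable g volume x t := by
    constructor
    · exact hi2
    · rw [Set.Ioc_eq_empty (not_lt.2 hx.2)]; exact integrableOn_empty
  have split : (∫ y in Set.Icc (0:ℝ) t, g y) = (∫ y in (0:ℝ)..x, g y) + ∫ y in x..t, g y := by
    rw [integral_Icc_eq_integral_Ioc, ← intervalIntegral.integral_of_le (hx.1.trans hx.2)]
    exact (intervalIntegral.integral_add_adjacent_intervals ii1 ii2).symm
  -- piece 1
  have hIP : (∫ y in (0:ℝ)..x, g y) ≤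
      R ^ 2 * (a ^ (α - 1 - δ') * a ^ (α - 1 - δ')) *
        (a ^ (δ' - α + (δ' - α) + 1) * (2 / (2 * α - 1))) := by
    have e1 : (∫ y in (0:ℝ)..x, g y) = (R ^ 2 * (a ^ (α - 1 - δ') * a ^ (α - 1 - δ'))) *
        ∫ y in (0:ℝ)..x, (T - y) ^ (δ' - α + (δ' - α)) := by
      rw [intervalIntegral.integral_of_le hx.1,
        setIntegral_congr_fun measurableSet_Ioc (heq1.mono Set.Ioc_subset_Icc_self),
        ← intervalIntegral.integral_of_le hx.1, intervalIntegral.integral_const_mul]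
    rw [e1]
    apply mul_le_mul_of_nonneg_left _ (by positivity)
    have e2 : (∫ y in (0:ℝ)..x, (T - y) ^ (δ' - α + (δ' - α))) =
        ∫ c in (T - x)..T, c ^ (δ' - α + (δ' - α)) := by
      rw [intervalIntegral.integral_comp_sub_left (fun c => c ^ (δ' - α + (δ' - α))) T, sub_zero]
    have hne : δ' - α + (δ' - α) ≠ -1 := by
      intro h; rw [hδdef] at h; linarith
    have h0T' : (0:ℝ) ∉ Set.uIcc (T - x) T := by
      rw [Set.uIcc_of_le (by linarith [hx.1])]
      exact fun hmem => absurd hmem.1 (not_le.2 ha0)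
    rw [e2, integral_rpow (Or.inr ⟨hne, h0T'⟩), ← hadef]
    have hm : δ' - α + (δ' - α) + 1 < 0 := by rw [hδdef]; linarith
    have hTm : 0 ≤ T ^ (δ' - α + (δ' - α) + 1) := Real.rpow_nonneg hT.le _
    calc (T ^ (δ' - α + (δ' - α) + 1) - a ^ (δ' - α + (δ' - α) + 1)) / (δ' - α + (δ' - α) + 1)
        = (a ^ (δ' - α + (δ' - α) + 1) - T ^ (δ' - α + (δ' - α) + 1)) /
          (-(δ' - α + (δ' - α) + 1)) := by rw [← neg_div_neg_eq, neg_sub]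
      _ ≤ a ^ (δ' - α + (δ' - α) + 1) / (-(δ' - α + (δ' - α) + 1)) := by
          gcongr <;> linarith
      _ = a ^ (δ' - α + (δ' - α) + 1) * (2 / (2 * α - 1)) := by
          rw [show -(δ' - α + (δ' - α) + 1) = (2 * α - 1) / 2 by rw [hδdef]; ring,
            div_div_eq_mul_div, mul_div_assoc]
  -- piece 2
  have hIQ : (∫ y in x..t, g y) ≤
      R ^ 2 * (a ^ (δ' - α) * a ^ (δ' - α)) *
        (a ^ (α - 1 - δ' + (α - 1 - δ') + 1) * (2 / (2 * α - 1))) := by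
    have e1 : (∫ y in x..t, g y) = (R ^ 2 * (a ^ (δ' - α) * a ^ (δ' - α))) *
        ∫ y in x..t, (T - y) ^ (α - 1 - δ' + (α - 1 - δ')) := by
      rw [intervalIntegral.integral_of_le hx.2,
        setIntegral_congr_fun measurableSet_Ioc heq2,
        ← intervalIntegral.integral_of_le hx.2, intervalIntegral.integral_const_mul]
    rw [e1]
    apply mul_le_mul_of_nonneg_left _ (by positivity)
    have e2 : (∫ y in x..t, (T - y) ^ (α - 1 - δ' + (α - 1 - δ'))) =
        ∫ c in (T - t)..(T - x), c ^ (α - 1 - δ' + (α - 1 - δ')) := by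
      rw [intervalIntegral.integral_comp_sub_left (fun c => c ^ (α - 1 - δ' + (α - 1 - δ'))) T]
    have hgt : (-1:ℝ) < α - 1 - δ' + (α - 1 - δ') := by rw [hδdef]; linarith
    rw [e2, integral_rpow (Or.inl hgt), ← hadef]
    have hm : 0 < α - 1 - δ' + (α - 1 - δ') + 1 := by rw [hδdef]; linarith
    have hεm : 0 ≤ (T - t) ^ (α - 1 - δ' + (α - 1 - δ') + 1) := Real.rpow_nonneg hε0.le _
    calc (a ^ (α - 1 - δ' + (α - 1 - δ') + 1) - (T - t) ^ (α - 1 - δ' + (α - 1 - δ') + 1)) /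
          (α - 1 - δ' + (α - 1 - δ') + 1)
        ≤ a ^ (α - 1 - δ' + (α - 1 - δ') + 1) / (α - 1 - δ' + (α - 1 - δ') + 1) := by
          gcongr <;> linarith
      _ = a ^ (α - 1 - δ' + (α - 1 - δ') + 1) * (2 / (2 * α - 1)) := by
          rw [show α - 1 - δ' + (α - 1 - δ') + 1 = (2 * α - 1) / 2 by rw [hδdef]; ring,
            div_div_eq_mul_div, mul_div_assoc]
  -- assemble
  have jP : a ^ (α - 1 - δ') * a ^ (α - 1 - δ') * a ^ (δ' - α + (δ' - α) + 1) = a ^ (-1:ℝ) := by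
    rw [← Real.rpow_add ha0, ← Real.rpow_add ha0]
    exact rpow_eqexp (by ring)
  have jQ : a ^ (δ' - α) * a ^ (δ' - α) * a ^ (α - 1 - δ' + (α - 1 - δ') + 1) = a ^ (-1:ℝ) := by
    rw [← Real.rpow_add ha0, ← Real.rpow_add ha0]
    exact rpow_eqexp (by ring)
  calc (∫ y in Set.Icc (0:ℝ) T, contr T (fker T α t) (gker T α t) x y *
        contr T (fker T α t) (gker T α t) x y)
      ≤ ∫ y in Set.Icc (0:ℝ) T, Set.indicator (Set.Icc (0:ℝ) t) g y := step1
    _ = (∫ y in (0:ℝ)..x, g y) + ∫ y in x..t, g y := by rw [step2, split]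
    _ ≤ R ^ 2 * (a ^ (α - 1 - δ') * a ^ (α - 1 - δ')) *
          (a ^ (δ' - α + (δ' - α) + 1) * (2 / (2 * α - 1))) +
        R ^ 2 * (a ^ (δ' - α) * a ^ (δ' - α)) *
          (a ^ (α - 1 - δ' + (α - 1 - δ') + 1) * (2 / (2 * α - 1))) := add_le_add hIP hIQ
    _ = R ^ 2 * (4 / (2 * α - 1)) * a ^ (-1:ℝ) := by
        rw [show R ^ 2 * (a ^ (α - 1 - δ') * a ^ (α - 1 - δ')) *
              (a ^ (δ' - α + (δ' - α) + 1) * (2 / (2 * α - 1))) =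
            (a ^ (α - 1 - δ') * a ^ (α - 1 - δ') * a ^ (δ' - α + (δ' - α) + 1)) *
              (R ^ 2 * (2 / (2 * α - 1))) by ring,
          show R ^ 2 * (a ^ (δ' - α) * a ^ (δ' - α)) *
              (a ^ (α - 1 - δ' + (α - 1 - δ') + 1) * (2 / (2 * α - 1))) =
            (a ^ (δ' - α) * a ^ (δ' - α) * a ^ (α - 1 - δ' + (α - 1 - δ') + 1)) *
              (R ^ 2 * (2 / (2 * α - 1))) by ring, jP, jQ]
        ring

end MainAux2

theorem stmt_13 (T α : ℝ) (hT : 0 < T) (hα : 1 / 2 < α) :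
    ∃ C > 0, ∀ t : ℝ, max 0 (T - 1 / Real.exp 1) < t → t < T →
      Real.sqrt (normSq T (contr T (fker T α t) (gker T α t))) ≤ C / lam T α t := by
  have hβ0 : (0:ℝ) < 2 * α - 1 := by linarith
  set Kc : ℝ := 1 / (2 * α - 1 - (2 * α - 1) / 4) + 1 / ((2 * α - 1) / 4) with hKcdef
  have hKc0 : 0 < Kc := by
    rw [hKcdef]
    have h1 : (0:ℝ) < 2 * α - 1 - (2 * α - 1) / 4 := by linarith
    have h2 : (0:ℝ) < (2 * α - 1) / 4 := by linarith
    positivity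
  set Csq : ℝ := Kc ^ 2 * (1 + |Real.log T|) / (2 * α - 1) ^ 2 with hCsqdef
  have hCsq0 : 0 < Csq := by
    rw [hCsqdef]
    have h1 : (0:ℝ) < 1 + |Real.log T| := by have := abs_nonneg (Real.log T); linarith
    positivity
  refine ⟨Real.sqrt Csq, Real.sqrt_pos.2 hCsq0, ?_⟩
  intro t ht1 ht2
  have ht0 : 0 < t := lt_of_le_of_lt (le_max_left 0 (T - 1 / Real.exp 1)) ht1
  have hε0 : 0 < T - t := by linarith
  have hεe : T - t < 1 / Real.exp 1 := by
    have := le_max_right 0 (T - 1 / Real.exp 1)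
    linarith
  have hloge : Real.log (T - t) < -1 := by
    have h1 := Real.log_lt_log hε0 hεe
    rwa [Real.log_div one_ne_zero (Real.exp_ne_zero 1), Real.log_one, Real.log_exp,
      zero_sub] at h1
  have hLneg : Real.log (T - t) < 0 := by linarith
  have hLabs : |Real.log (T - t)| = -Real.log (T - t) := abs_of_neg hLneg
  have hL1 : 1 < |Real.log (T - t)| := by rw [hLabs]; linarith
  have hL0 : 0 < |Real.log (T - t)| := by linarith
  have hlam0 : 0 < lam T α t := div_pos hL0 hβ0
  have hLlam : |Real.log (T - t)| = (2 * α - 1) * lam T α t := by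
    rw [lam]
    field_simp
  set CE4 : ℝ := (Kc / (2 * Real.sqrt (lam T α t) * |Real.log (T - t)|)) ^ 2 *
    (4 / (2 * α - 1)) with hCE4def
  have hCE40 : 0 ≤ CE4 := by positivity
  -- majorant for the outer integral
  set κ : ℝ → ℝ := Set.indicator (Set.Icc (0:ℝ) t) (fun x => CE4 * (T - x) ^ (-1:ℝ)) with hκdef
  have hκint : IntegrableOn κ (Set.Icc 0 T) := by
    have hcont : ContinuousOn (fun x => CE4 * (T - x) ^ (-1:ℝ)) (Set.Icc 0 t) := by
      apply continuousOn_const.mul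
      apply ContinuousOn.rpow_const ((continuous_const.sub continuous_id).continuousOn)
      intro y hy
      exact Or.inl (ne_of_gt (by have := hy.2; show 0 < T - y; linarith))
    exact ((hcont.integrableOn_compact isCompact_Icc).integrable_indicator
      measurableSet_Icc).integrableOn
  have hbound : ∀ x ∈ Set.Icc (0:ℝ) T,
      (∫ y in Set.Icc (0:ℝ) T, contr T (fker T α t) (gker T α t) x y *
        contr T (fker T α t) (gker T α t) x y) ≤ κ x := by
    intro x _
    by_cases hxt : x ∈ Set.Icc (0:ℝ) t
    · rw [hκdef, Set.indicator_of_mem hxt]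
      exact contrE4 hT hα ht2 hL0 hxt
    · rw [hκdef, Set.indicator_of_notMem hxt]
      have hz : ∀ y, contr T (fker T α t) (gker T α t) x y = 0 :=
        fun y => contr_zero_left hxt y
      simp only [hz, mul_zero, integral_zero, le_refl]
  have hE5 : normSq T (contr T (fker T α t) (gker T α t)) ≤ ∫ x in Set.Icc (0:ℝ) T, κ x := by
    rw [normSq, ip]
    exact integral_mono_of_nonneg
      (Filter.Eventually.of_forall fun x => integral_nonneg fun y => mul_self_nonneg _)
      hκint (ae_restrict_of_forall_mem measurableSet_Icc hbound)
  -- compute the majorant integral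
  have h0m : (0:ℝ) ∉ Set.uIcc (T - t) T := by
    rw [Set.uIcc_of_le (by linarith)]
    exact fun hmem => absurd hmem.1 (not_le.2 hε0)
  have hinner : (∫ x in (0:ℝ)..t, (T - x) ^ (-1:ℝ)) = Real.log T - Real.log (T - t) := by
    have e1 : (∫ x in (0:ℝ)..t, (T - x) ^ (-1:ℝ)) = ∫ c in (T - t)..(T - 0), c ^ (-1:ℝ) :=
      intervalIntegral.integral_comp_sub_left (fun c => c ^ (-1:ℝ)) T
    rw [e1, sub_zero]
    simp only [Real.rpow_neg_one]
    rw [integral_inv h0m, Real.log_div (ne_of_gt hT) (ne_of_gt hε0)]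
  have hκval : (∫ x in Set.Icc (0:ℝ) T, κ x) =
      CE4 * (Real.log T - Real.log (T - t)) := by
    rw [hκdef, setIntegral_indicator measurableSet_Icc,
      Set.inter_eq_self_of_subset_right (Set.Icc_subset_Icc le_rfl ht2.le),
      integral_const_mul, integral_Icc_eq_integral_Ioc,
      ← intervalIntegral.integral_of_le ht0.le, hinner]
  have hlogbound : Real.log T - Real.log (T - t) ≤
      (1 + |Real.log T|) * |Real.log (T - t)| := by
    have h1 : Real.log T ≤ |Real.log T| := le_abs_self _
    have h2 : -Real.log (T - t) = |Real.log (T - t)| := hLabs.symm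
    nlinarith [abs_nonneg (Real.log T)]
  have hfinal : normSq T (contr T (fker T α t) (gker T α t)) ≤ Csq / (lam T α t) ^ 2 := by
    have h3 : normSq T (contr T (fker T α t) (gker T α t)) ≤
        CE4 * ((1 + |Real.log T|) * |Real.log (T - t)|) := by
      calc normSq T (contr T (fker T α t) (gker T α t)) ≤ ∫ x in Set.Icc (0:ℝ) T, κ x := hE5
        _ = CE4 * (Real.log T - Real.log (T - t)) := hκval
        _ ≤ CE4 * ((1 + |Real.log T|) * |Real.log (T - t)|) :=
            mul_le_mul_of_nonneg_left hlogbound hCE40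
    refine h3.trans (le_of_eq ?_)
    rw [hCE4def, hCsqdef, hLlam]
    have hss : Real.sqrt (lam T α t) ^ 2 = lam T α t := Real.sq_sqrt hlam0.le
    rw [div_pow, mul_pow, mul_pow, hss]
    have hlne : lam T α t ≠ 0 := ne_of_gt hlam0
    field_simp
    ring
  have hC0 : (0:ℝ) ≤ Real.sqrt Csq := Real.sqrt_nonneg _
  calc Real.sqrt (normSq T (contr T (fker T α t) (gker T α t)))
      ≤ Real.sqrt (Csq / (lam T α t) ^ 2) := Real.sqrt_le_sqrt hfinal
    _ = Real.sqrt Csq / lam T α t := by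
        rw [show Csq / (lam T α t) ^ 2 = (Real.sqrt Csq / lam T α t) ^ 2 by
          rw [div_pow, Real.sq_sqrt hCsq0.le]]
        exact Real.sqrt_sq (div_nonneg hC0 hlam0.le)
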